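/- Let G be a simple graph, v a vertex of G, r a natural number, and suppose every vertex of G is joined to v by a path of length at most r and G has m ≥ 1 edges. Then among all economical walks in G starting at v, the maximum length is exactly 2m, and every economical walk from v of length 2m traverses every edge of G (so the subgraph formed by its visited vertices and traversed edges is all of G). -/

import Mathlib

open SimpleGraph Finset

section Aux

variable {V : Type*} [Fintype V] [DecidableEq V] (G : SimpleGraph V) [DecidableRel G.Adj]

theorem dart_snd_fiber_card_eq_degree' (v : V) :
    #{d : G.Dart | d.snd = v} = G.degree v := by
  rw [← G.dart_fst_fiber_card_eq_degree v]
  apply Finset.card_nbij (fun d => d.symm)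
  · intro d hd; simp_all [Dart.symm]
  · intro d hd d' hd' h
    exact SimpleGraph.Dart.symm_involutive.injective h
  · intro d hd
    refine ⟨d.symm, by simp_all [Dart.symm], by simp⟩

theorem walk_dart_count (x : V) {s u : V} (w : G.Walk s u) :
    w.darts.countP (fun d => d.fst = x) + (if x = u then 1 else 0) =
    w.darts.countP (fun d => d.snd = x) + (if x = s then 1 else 0) := by
  induction w with
  | nil => simp
  | @cons a b c h p ih =>
    simp only [SimpleGraph.Walk.darts_cons, List.countP_cons, decide_eq_true_eq]
    rcases eq_or_ne x a with rfl|h1 <;> rcases eq_or_ne x b with rfl|h2 <;>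
      simp_all [eq_comm] <;> omega

theorem exists_unused_out_dart {s u : V} (w : G.Walk s u) (hn : w.darts.Nodup)
    (hus : u ≠ s) : ∃ d : G.Dart, d.fst = u ∧ d ∉ w.darts := by
  by_contra hc
  push_neg at hc
  have hfil := hn.filter (fun d => decide (d.fst = u))
  have hfil2 := hn.filter (fun d => decide (d.snd = u))
  have h1 : G.degree u ≤ w.darts.countP (fun d => d.fst = u) := by
    rw [List.countP_eq_length_filter, ← List.toFinset_card_of_nodup hfil,
      ← G.dart_fst_fiber_card_eq_degree u]
    apply Finset.card_le_card
    intro d hd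
    simp only [Finset.mem_filter, Finset.mem_univ, true_and] at hd
    simp only [List.mem_toFinset, List.mem_filter, decide_eq_true_eq]
    exact ⟨hc d hd, hd⟩
  have h2 : w.darts.countP (fun d => d.snd = u) ≤ G.degree u := by
    rw [List.countP_eq_length_filter, ← List.toFinset_card_of_nodup hfil2,
      ← dart_snd_fiber_card_eq_degree' G u]
    apply Finset.card_le_card
    intro d hd
    simp only [List.mem_toFinset, List.mem_filter, decide_eq_true_eq] at hd
    simp only [Finset.mem_filter, Finset.mem_univ, true_and]
    exact hd.2
  have h3 := walk_dart_count G u w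
  simp only [if_pos, if_neg hus, reduceIte] at h3
  omega

theorem extend_to_closed : ∀ (n : ℕ) (s u : V) (w : G.Walk s u), w.darts.Nodup →
    Fintype.card G.Dart ≤ w.length + n →
    ∃ w' : G.Walk s s, w'.darts.Nodup ∧ (∀ d ∈ w.darts, d ∈ w'.darts) ∧
      w.length ≤ w'.length := by
  intro n
  induction n with
  | zero =>
    intro s u w hn hlen
    have hus : u = s := by
      by_contra hus
      obtain ⟨d, hd1, hd2⟩ := exists_unused_out_dart G w hn hus
      -- all darts are used since length = card
      have hle : w.darts.length ≤ Fintype.card G.Dart := hn.length_le_card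
      rw [w.length_darts] at hle
      have hcard : w.darts.toFinset = Finset.univ := by
        apply Finset.eq_univ_of_card
        rw [List.toFinset_card_of_nodup hn, w.length_darts]
        omega
      exact hd2 (by rw [← List.mem_toFinset, hcard]; exact Finset.mem_univ d)
    subst hus
    exact ⟨w, hn, fun d hd => hd, le_rfl⟩
  | succ n ih =>
    intro s u w hn hlen
    by_cases hud : ∃ d : G.Dart, d.fst = u ∧ d ∉ w.darts
    · obtain ⟨d, hd1, hd2⟩ := hud
      have hadj : G.Adj u d.snd := hd1 ▸ d.adj
      have hdeq : (⟨(u, d.snd), hadj⟩ : G.Dart) = d := by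
        ext <;> simp [hd1.symm]
      set w₁ := w.concat hadj with hw₁
      have hdarts : w₁.darts = w.darts.concat d := by
        rw [hw₁, SimpleGraph.Walk.darts_concat, hdeq]
      have hn₁ : w₁.darts.Nodup := by
        rw [hdarts, List.concat_eq_append]
        exact List.Nodup.append hn (List.nodup_singleton d)
          (by simp [List.disjoint_singleton, hd2])
      have hlen₁ : w₁.length = w.length + 1 := w.length_concat hadj
      obtain ⟨w', h1, h2, h3⟩ := ih s d.snd w₁ hn₁ (by omega)
      refine ⟨w', h1, fun e he => h2 e ?_, by omega⟩
      rw [hdarts]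
      simp [List.concat_eq_append, he]
    · push_neg at hud
      by_cases hus : u = s
      · subst hus
        exact ⟨w, hn, fun d hd => hd, le_rfl⟩
      · obtain ⟨d, hd1, hd2⟩ := exists_unused_out_dart G w hn hus
        exact absurd (hud d hd1) (by exact fun h => hd2 h)

theorem find_local_unused (L : List G.Dart) (S : List V)
    (hL : ∀ d ∈ L, d.snd ∈ S) :
    ∀ {a b : V} (_ : G.Walk a b), a ∈ S → (∃ d : G.Dart, d.fst = b ∧ d ∉ L) →
    ∃ d : G.Dart, d.fst ∈ S ∧ d ∉ L := by
  intro a b p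
  induction p with
  | nil =>
    rintro ha ⟨d, hd1, hd2⟩
    exact ⟨d, hd1 ▸ ha, hd2⟩
  | @cons a c b h p ih =>
    intro ha hex
    by_cases hm : (⟨(a, c), h⟩ : G.Dart) ∈ L
    · exact ih (hL _ hm) hex
    · exact ⟨⟨(a, c), h⟩, ha, hm⟩

theorem eulerian_exists (v : V) (hball : ∀ u : V, Nonempty (G.Walk v u)) :
    ∀ (n : ℕ) (w : G.Walk v v), w.darts.Nodup →
    Fintype.card G.Dart ≤ w.length + n →
    ∃ w' : G.Walk v v, w'.darts.Nodup ∧ ∀ d : G.Dart, d ∈ w'.darts := by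
  intro n
  induction n with
  | zero =>
    intro w hn hlen
    refine ⟨w, hn, fun d => ?_⟩
    have hcard : w.darts.toFinset = Finset.univ := by
      apply Finset.eq_univ_of_card
      rw [List.toFinset_card_of_nodup hn, w.length_darts]
      have := hn.length_le_card
      rw [w.length_darts] at this
      omega
    rw [← List.mem_toFinset, hcard]
    exact Finset.mem_univ d
  | succ n ih =>
    intro w hn hlen
    by_cases hall : ∀ d : G.Dart, d ∈ w.darts
    · exact ⟨w, hn, hall⟩
    · push_neg at hall
      obtain ⟨d₀, hd₀⟩ := hall
      obtain ⟨p⟩ := hball d₀.fst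
      obtain ⟨d, hdS, hd⟩ := find_local_unused G w.darts w.support
        (fun e he => w.dart_snd_mem_support_of_mem_darts he)
        p w.start_mem_support ⟨d₀, rfl, hd₀⟩
      -- rotate w to start at x := d.fst
      set c := w.rotate _ hdS with hc
      have hcperm : List.Perm c.darts w.darts := (w.rotate_darts _ hdS).perm
      have hcn : c.darts.Nodup := hcperm.nodup_iff.mpr hn
      have hclen : c.length = w.length := by
        rw [← c.length_darts, ← w.length_darts]; exact hcperm.length_eq
      have hadj : G.Adj d.fst d.snd := d.adj
      set c' := c.concat hadj with hc'
      have hdeq : (⟨(d.fst, d.snd), hadj⟩ : G.Dart) = d := by ext <;> rfl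
      have hdarts : c'.darts = c.darts.concat d := by
        rw [hc', SimpleGraph.Walk.darts_concat, hdeq]
      have hdc : d ∉ c.darts := fun h => hd (hcperm.mem_iff.mp h)
      have hn' : c'.darts.Nodup := by
        rw [hdarts, List.concat_eq_append]
        exact List.Nodup.append hcn (List.nodup_singleton d)
          (by simp [List.disjoint_singleton, hdc])
      have hlen' : c'.length = w.length + 1 := by
        rw [hc', c.length_concat hadj, hclen]
      obtain ⟨w'', h1, h2, h3⟩ := extend_to_closed G n d.fst d.snd c' hn' (by omega)
      have hmemw : ∀ e ∈ w.darts, e ∈ w''.darts := by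
        intro e he
        apply h2
        rw [hdarts, List.concat_eq_append]
        exact List.mem_append_left _ (hcperm.mem_iff.mpr he)
      have hvsup : v ∈ w''.support := by
        by_cases hxv : d.fst = v
        · rw [← hxv]; exact w''.start_mem_support
        · -- then w is not nil, its first dart has fst = v
          cases w with
          | nil => exact absurd (by simpa [hc] using hdS) hxv
          | cons h p =>
            rename_i b
            exact SimpleGraph.Walk.dart_fst_mem_support_of_mem_darts _
              (hmemw ⟨(v, b), h⟩ (by simp [SimpleGraph.Walk.darts_cons]))
      set w''' := w''.rotate _ hvsup with hw'''
      have hperm3 : List.Perm w'''.darts w''.darts := (w''.rotate_darts _ hvsup).perm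
      have hn3 : w'''.darts.Nodup := hperm3.nodup_iff.mpr h1
      have hlen3 : w.length + 1 ≤ w'''.length := by
        rw [← w'''.length_darts, hperm3.length_eq, w''.length_darts]
        omega
      exact ih w''' hn3 (by omega)

end Aux

/-- Let `G` be a finite simple graph with `m ≥ 1` edges in which every vertex is joined to
`v` by a walk of length at most `r`. Then the maximum length of an economical walk (a walk
whose darts are pairwise distinct) starting at `v` is exactly `2m`, and every economical walk
from `v` of length `2m` traverses every edge of `G` and visits every vertex of `G` (so the
subgraph formed by its visited vertices and traversed edges is all of `G`). -/
theorem economical_walk_max_length {V : Type*} [Fintype V] [DecidableEq V]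
    (G : SimpleGraph V) [DecidableRel G.Adj] (v : V) (r : ℕ)
    (hball : ∀ u : V, ∃ w : G.Walk v u, w.length ≤ r)
    (hm : 1 ≤ G.edgeFinset.card) :
    (∃ (u : V) (w : G.Walk v u), w.darts.Nodup ∧ w.length = 2 * G.edgeFinset.card) ∧
    (∀ (u : V) (w : G.Walk v u), w.darts.Nodup → w.length ≤ 2 * G.edgeFinset.card) ∧
    ∀ (u : V) (w : G.Walk v u), w.darts.Nodup → w.length = 2 * G.edgeFinset.card →
      (∀ e ∈ G.edgeSet, e ∈ w.edges) ∧ ∀ x : V, x ∈ w.support := by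
  have hcard := G.dart_card_eq_twice_card_edges
  have hball' : ∀ u : V, Nonempty (G.Walk v u) := fun u => ⟨(hball u).choose⟩
  refine ⟨?_, ?_, ?_⟩
  · obtain ⟨w', hn, hall⟩ := eulerian_exists G v hball' (Fintype.card G.Dart)
      SimpleGraph.Walk.nil (by simp) (by simp)
    refine ⟨v, w', hn, ?_⟩
    rw [← hcard, ← w'.length_darts, ← List.toFinset_card_of_nodup hn]
    rw [Finset.eq_univ_iff_forall.mpr (fun d => List.mem_toFinset.mpr (hall d))]
    exact Finset.card_univ
  · intro u w hn
    have := hn.length_le_card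
    rw [w.length_darts, hcard] at this
    exact this
  · intro u w hn hlen
    have hall : ∀ d : G.Dart, d ∈ w.darts := by
      have huniv : w.darts.toFinset = Finset.univ := by
        apply Finset.eq_univ_of_card
        rw [List.toFinset_card_of_nodup hn, w.length_darts, hlen, hcard]
      intro d
      rw [← List.mem_toFinset, huniv]
      exact Finset.mem_univ d
    constructor
    · intro e he
      induction e with
      | h a b =>
        have hab : G.Adj a b := he
        have : (⟨(a, b), hab⟩ : G.Dart) ∈ w.darts := hall _
        rw [SimpleGraph.Walk.edges]
        exact List.mem_map_of_mem this
    · intro x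
      by_cases hxv : x = v
      · subst hxv
        -- w : Walk v u, start is v
        exact w.start_mem_support
      · obtain ⟨p, _⟩ := hball x
        have hnn : ¬ p.reverse.Nil := SimpleGraph.Walk.not_nil_of_ne (fun h => hxv h)
        obtain ⟨y, hadj, q, _⟩ := SimpleGraph.Walk.not_nil_iff.mp hnn
        exact SimpleGraph.Walk.dart_fst_mem_support_of_mem_darts _ (hall ⟨(x, y), hadj⟩)
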